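/- Let A₀ be a real symmetric n×n matrix and a₀ ∈ ℝⁿ, and let V = [[−A₀, a₀, 0], [a₀ᵀ, 0, −a₀ᵀ], [0, −a₀, A₀]] (block sizes n,1,n). Suppose L : ℝ → M(2n+1, ℝ) is a differentiable map of the block form L(t) = [[−Q(t), r(t), 0], [a₀ᵀ, 0, −r(t)ᵀ], [0, −a₀, Q(t)ᵀ]] satisfying L̇ = [L, M] with M(t) = [[−Q(t), 0, 0], [a₀ᵀ, 0, 0], [0, −a₀, Q(t)ᵀ]] and the initial condition L(0) = V. Then L(t) = G₁(t)⁻¹ V G₁(t) for all t, where exp(tV) = G₁(t) G₂(t) is the block Cholesky decomposition with G₁(t) block lower triangular and G₂(t) block upper triangular with identity diagonal blocks. -/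

import Mathlib

open Matrix

/-- Index type for `(2n+1)×(2n+1)` real matrices with block sizes `(n, 1, n)`. -/
abbrev Idx (n : ℕ) := (Fin n ⊕ Fin 1) ⊕ Fin n

/-- The `3×3`-block matrix with block sizes `(n,1,n)` and the given blocks. -/
def blk3 {n : ℕ} (A₁₁ : Matrix (Fin n) (Fin n) ℝ) (A₁₂ : Matrix (Fin n) (Fin 1) ℝ)
    (A₁₃ : Matrix (Fin n) (Fin n) ℝ) (A₂₁ : Matrix (Fin 1) (Fin n) ℝ)
    (A₂₂ : Matrix (Fin 1) (Fin 1) ℝ) (A₂₃ : Matrix (Fin 1) (Fin n) ℝ)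
    (A₃₁ : Matrix (Fin n) (Fin n) ℝ) (A₃₂ : Matrix (Fin n) (Fin 1) ℝ)
    (A₃₃ : Matrix (Fin n) (Fin n) ℝ) : Matrix (Idx n) (Idx n) ℝ :=
  Matrix.fromBlocks (Matrix.fromBlocks A₁₁ A₁₂ A₂₁ A₂₂) (Matrix.fromRows A₁₃ A₂₃)
    (Matrix.fromCols A₃₁ A₃₂) A₃₃

/-- The matrix `J = [[0,0,Iₙ],[0,1,0],[Iₙ,0,0]]` with block sizes `(n,1,n)`. -/
def Jmat (n : ℕ) : Matrix (Idx n) (Idx n) ℝ := blk3 0 0 1 0 1 0 1 0 0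

/-- The matrix `V = [[−A₀, a₀, 0], [a₀ᵀ, 0, −a₀ᵀ], [0, −a₀, A₀]]` with block sizes `(n,1,n)`. -/
def Vmat {n : ℕ} (A₀ : Matrix (Fin n) (Fin n) ℝ) (a₀ : Matrix (Fin n) (Fin 1) ℝ) :
    Matrix (Idx n) (Idx n) ℝ :=
  blk3 (-A₀) a₀ 0 a₀ᵀ 0 (-a₀ᵀ) 0 (-a₀) A₀

/-! ### Auxiliary infrastructure -/

open NormedSpace intervalIntegral

attribute [local instance] Matrix.linftyOpNormedAddCommGroup Matrix.linftyOpNormedSpace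
  Matrix.linftyOpNormedRing Matrix.linftyOpNormedAlgebra

set_option linter.unusedSectionVars false
set_option linter.unusedVariables false
set_option maxHeartbeats 1000000
set_option synthInstance.maxHeartbeats 400000

namespace S16

/-! #### blk3 algebra -/

variable {n : ℕ} {A₁₁ B₁₁ : Matrix (Fin n) (Fin n) ℝ} {A₁₂ B₁₂ : Matrix (Fin n) (Fin 1) ℝ}
  {A₁₃ B₁₃ : Matrix (Fin n) (Fin n) ℝ} {A₂₁ B₂₁ : Matrix (Fin 1) (Fin n) ℝ}
  {A₂₂ B₂₂ : Matrix (Fin 1) (Fin 1) ℝ} {A₂₃ B₂₃ : Matrix (Fin 1) (Fin n) ℝ}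
  {A₃₁ B₃₁ : Matrix (Fin n) (Fin n) ℝ} {A₃₂ B₃₂ : Matrix (Fin n) (Fin 1) ℝ}
  {A₃₃ B₃₃ : Matrix (Fin n) (Fin n) ℝ}

@[simp] lemma b11 (i j) : blk3 A₁₁ A₁₂ A₁₃ A₂₁ A₂₂ A₂₃ A₃₁ A₃₂ A₃₃ (Sum.inl (Sum.inl i)) (Sum.inl (Sum.inl j)) = A₁₁ i j := rfl
@[simp] lemma b12 (i j) : blk3 A₁₁ A₁₂ A₁₃ A₂₁ A₂₂ A₂₃ A₃₁ A₃₂ A₃₃ (Sum.inl (Sum.inl i)) (Sum.inl (Sum.inr j)) = A₁₂ i j := rfl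
@[simp] lemma b13 (i j) : blk3 A₁₁ A₁₂ A₁₃ A₂₁ A₂₂ A₂₃ A₃₁ A₃₂ A₃₃ (Sum.inl (Sum.inl i)) (Sum.inr j) = A₁₃ i j := rfl
@[simp] lemma b21 (i j) : blk3 A₁₁ A₁₂ A₁₃ A₂₁ A₂₂ A₂₃ A₃₁ A₃₂ A₃₃ (Sum.inl (Sum.inr i)) (Sum.inl (Sum.inl j)) = A₂₁ i j := rfl
@[simp] lemma b22 (i j) : blk3 A₁₁ A₁₂ A₁₃ A₂₁ A₂₂ A₂₃ A₃₁ A₃₂ A₃₃ (Sum.inl (Sum.inr i)) (Sum.inl (Sum.inr j)) = A₂₂ i j := rfl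
@[simp] lemma b23 (i j) : blk3 A₁₁ A₁₂ A₁₃ A₂₁ A₂₂ A₂₃ A₃₁ A₃₂ A₃₃ (Sum.inl (Sum.inr i)) (Sum.inr j) = A₂₃ i j := rfl
@[simp] lemma b31 (i j) : blk3 A₁₁ A₁₂ A₁₃ A₂₁ A₂₂ A₂₃ A₃₁ A₃₂ A₃₃ (Sum.inr i) (Sum.inl (Sum.inl j)) = A₃₁ i j := rfl
@[simp] lemma b32 (i j) : blk3 A₁₁ A₁₂ A₁₃ A₂₁ A₂₂ A₂₃ A₃₁ A₃₂ A₃₃ (Sum.inr i) (Sum.inl (Sum.inr j)) = A₃₂ i j := rfl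
@[simp] lemma b33 (i j) : blk3 A₁₁ A₁₂ A₁₃ A₂₁ A₂₂ A₂₃ A₃₁ A₃₂ A₃₃ (Sum.inr i) (Sum.inr j) = A₃₃ i j := rfl

lemma blk3_mul : blk3 A₁₁ A₁₂ A₁₃ A₂₁ A₂₂ A₂₃ A₃₁ A₃₂ A₃₃ * blk3 B₁₁ B₁₂ B₁₃ B₂₁ B₂₂ B₂₃ B₃₁ B₃₂ B₃₃
    = blk3 (A₁₁*B₁₁ + A₁₂*B₂₁ + A₁₃*B₃₁) (A₁₁*B₁₂ + A₁₂*B₂₂ + A₁₃*B₃₂) (A₁₁*B₁₃ + A₁₂*B₂₃ + A₁₃*B₃₃)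
           (A₂₁*B₁₁ + A₂₂*B₂₁ + A₂₃*B₃₁) (A₂₁*B₁₂ + A₂₂*B₂₂ + A₂₃*B₃₂) (A₂₁*B₁₃ + A₂₂*B₂₃ + A₂₃*B₃₃)
           (A₃₁*B₁₁ + A₃₂*B₂₁ + A₃₃*B₃₁) (A₃₁*B₁₂ + A₃₂*B₂₂ + A₃₃*B₃₂) (A₃₁*B₁₃ + A₃₂*B₂₃ + A₃₃*B₃₃) := by
  ext (i | i) (j | j) <;> try (rcases i with i | i) <;> rcases j with j | j <;>
    simp [Matrix.mul_apply, Fintype.sum_sum_type, Finset.sum_add_distrib]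

lemma blk3_add : blk3 A₁₁ A₁₂ A₁₃ A₂₁ A₂₂ A₂₃ A₃₁ A₃₂ A₃₃ + blk3 B₁₁ B₁₂ B₁₃ B₂₁ B₂₂ B₂₃ B₃₁ B₃₂ B₃₃
    = blk3 (A₁₁+B₁₁) (A₁₂+B₁₂) (A₁₃+B₁₃) (A₂₁+B₂₁) (A₂₂+B₂₂) (A₂₃+B₂₃) (A₃₁+B₃₁) (A₃₂+B₃₂) (A₃₃+B₃₃) := by
  ext (i | i) (j | j) <;> try (rcases i with i | i) <;> rcases j with j | j <;> simp

lemma blk3_one : (1 : Matrix (Idx n) (Idx n) ℝ) = blk3 1 0 0 0 1 0 0 0 1 := by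
  ext (i | i) (j | j) <;> try (rcases i with i | i) <;> rcases j with j | j <;>
    simp [Matrix.one_apply, Sum.inl.injEq, Sum.inr.injEq]

lemma blk3_congr (h11 : A₁₁ = B₁₁) (h12 : A₁₂ = B₁₂) (h13 : A₁₃ = B₁₃) (h21 : A₂₁ = B₂₁)
    (h22 : A₂₂ = B₂₂) (h23 : A₂₃ = B₂₃) (h31 : A₃₁ = B₃₁) (h32 : A₃₂ = B₃₂) (h33 : A₃₃ = B₃₃) :
    blk3 A₁₁ A₁₂ A₁₃ A₂₁ A₂₂ A₂₃ A₃₁ A₃₂ A₃₃ = blk3 B₁₁ B₁₂ B₁₃ B₂₁ B₂₂ B₂₃ B₃₁ B₃₂ B₃₃ := by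
  subst h11 h12 h13 h21 h22 h23 h31 h32 h33; rfl

lemma blk3_transpose : (blk3 A₁₁ A₁₂ A₁₃ A₂₁ A₂₂ A₂₃ A₃₁ A₃₂ A₃₃)ᵀ
    = blk3 A₁₁ᵀ A₂₁ᵀ A₃₁ᵀ A₁₂ᵀ A₂₂ᵀ A₃₂ᵀ A₁₃ᵀ A₂₃ᵀ A₃₃ᵀ := by
  ext (i | i) (j | j) <;> try (rcases i with i | i) <;> rcases j with j | j <;> simp

lemma blk3_neg : -(blk3 A₁₁ A₁₂ A₁₃ A₂₁ A₂₂ A₂₃ A₃₁ A₃₂ A₃₃)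
    = blk3 (-A₁₁) (-A₁₂) (-A₁₃) (-A₂₁) (-A₂₂) (-A₂₃) (-A₃₁) (-A₃₂) (-A₃₃) := by
  ext (i | i) (j | j) <;> try (rcases i with i | i) <;> rcases j with j | j <;> simp

/-! #### the strictly-upper projection -/

def ordIdx : Idx n → ℕ := Sum.elim (Sum.elim (fun _ => 0) (fun _ => 1)) (fun _ => 2)

noncomputable def upProj (n : ℕ) : Matrix (Idx n) (Idx n) ℝ →L[ℝ] Matrix (Idx n) (Idx n) ℝ :=
  LinearMap.toContinuousLinearMap
    { toFun := fun X => Matrix.of fun i j => if ordIdx i < ordIdx j then X i j else 0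
      map_add' := fun X Y => by ext i j; by_cases h : ordIdx i < ordIdx j <;> simp [h]
      map_smul' := fun c X => by ext i j; by_cases h : ordIdx i < ordIdx j <;> simp [h] }

lemma upProj_apply (X : Matrix (Idx n) (Idx n) ℝ) (i j : Idx n) :
    upProj n X i j = if ordIdx i < ordIdx j then X i j else 0 := rfl

lemma upProj_eq_zero {X : Matrix (Idx n) (Idx n) ℝ} :
    upProj n X = 0 ↔ ∀ i j, ordIdx i < ordIdx j → X i j = 0 := by
  constructor
  · intro h i j hij
    have := congrFun (congrFun h i) j
    simpa [upProj_apply, hij] using this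
  · intro h; ext i j
    by_cases hij : ordIdx i < ordIdx j <;> simp [upProj_apply, hij, h]

lemma upProj_mul_low {X Y : Matrix (Idx n) (Idx n) ℝ} (hY : upProj n Y = 0) :
    upProj n (X * Y) = upProj n (upProj n X * Y) := by
  rw [upProj_eq_zero] at hY
  ext i j
  rw [upProj_apply, upProj_apply]
  by_cases hij : ordIdx i < ordIdx j
  · rw [if_pos hij, if_pos hij, Matrix.mul_apply, Matrix.mul_apply]
    refine Finset.sum_congr rfl fun k _ => ?_
    rw [upProj_apply]
    by_cases hik : ordIdx i < ordIdx k
    · rw [if_pos hik]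
    · rw [if_neg hik, zero_mul, hY k j (lt_of_le_of_lt (not_lt.mp hik) hij), mul_zero]
  · rw [if_neg hij, if_neg hij]

/-! #### positive definiteness -/

lemma posDef_submatrix_inl {α β : Type*} [Fintype α] [Fintype β]
    {M : Matrix (α ⊕ β) (α ⊕ β) ℝ} (h : M.PosDef) :
    (M.submatrix Sum.inl Sum.inl).PosDef := by
  rw [Matrix.posDef_iff_dotProduct_mulVec] at h ⊢
  constructor
  · ext i j
    have := congrFun (congrFun h.1 (Sum.inl i)) (Sum.inl j)
    simpa using this
  · intro x hx
    have hy : (Sum.elim x 0 : α ⊕ β → ℝ) ≠ 0 := by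
      intro h0
      exact hx (funext fun i => congrFun h0 (Sum.inl i))
    have := h.2 hy
    convert this using 1
    simp [dotProduct, Matrix.mulVec, Fintype.sum_sum_type]

lemma posDef_exp_symm {m : Type*} [Fintype m] [DecidableEq m]
    {A : Matrix m m ℝ} (hA : Aᵀ = A) : (exp A).PosDef := by
  have h2 : (2:ℝ)⁻¹ • A + (2:ℝ)⁻¹ • A = A := by
    rw [← add_smul]; norm_num
  set S := exp ((2:ℝ)⁻¹ • A) with hS
  have hSS : S * S = exp A := by
    rw [hS, ← Matrix.exp_add_of_commute _ _ (Commute.refl _), h2]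
  have hSt : Sᵀ = S := by
    rw [hS, ← Matrix.exp_transpose, transpose_smul, hA]
  have hinj : Function.Injective (S.mulVec) := by
    obtain ⟨iv⟩ := (Matrix.isUnit_exp ((2:ℝ)⁻¹ • A)).nonempty_invertible
    haveI : Invertible S := iv
    exact Matrix.mulVec_injective_of_invertible S
  rw [Matrix.posDef_iff_dotProduct_mulVec]
  constructor
  · ext i j
    have : (exp A)ᵀ = exp A := by rw [← Matrix.exp_transpose, hA]
    simpa using congrFun (congrFun this i) j
  · intro x hx
    have hyx : S *ᵥ x ≠ 0 := fun h0 => hx (hinj (by simpa using h0))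
    have hdp : star x ⬝ᵥ (exp A) *ᵥ x = (S *ᵥ x) ⬝ᵥ (S *ᵥ x) := by
      rw [← hSS, ← Matrix.mulVec_mulVec, Matrix.dotProduct_mulVec]
      congr 1
      rw [show star x = x from funext fun i => star_trivial _, ← hSt, Matrix.vecMul_transpose, hSt]
    rw [hdp]
    obtain ⟨i, hi⟩ := Function.ne_iff.mp hyx
    exact Finset.sum_pos' (fun k _ => mul_self_nonneg _)
      ⟨i, Finset.mem_univ i, mul_self_pos.mpr hi⟩

/-! #### entrywise calculus -/

variable {m l p : Type*} [Fintype m] [DecidableEq m] [Fintype l] [DecidableEq l]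
  [Fintype p] [DecidableEq p]

lemma matrix_sum_entries (X : Matrix m l ℝ) :
    ∑ q : m × l, X q.1 q.2 • Matrix.single q.1 q.2 (1:ℝ) = X := by
  ext a b
  rw [Matrix.sum_apply]
  simp [Matrix.single, ite_and]
  rw [Finset.sum_eq_single (a, b)] <;> simp +contextual [eq_comm]

lemma hasDerivAt_matrix {F : ℝ → Matrix m l ℝ} {F' : Matrix m l ℝ} {t : ℝ}
    (h : ∀ i j, HasDerivAt (fun s => F s i j) (F' i j) t) : HasDerivAt F F' t := by
  have h2 : HasDerivAt (fun s => ∑ q : m × l, F s q.1 q.2 • Matrix.single q.1 q.2 (1:ℝ))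
      (∑ q : m × l, F' q.1 q.2 • Matrix.single q.1 q.2 (1:ℝ)) t :=
    HasDerivAt.fun_sum (fun q _ => (h q.1 q.2).smul_const _)
  simpa only [matrix_sum_entries] using h2

noncomputable def entryCLM (i : m) (j : l) : Matrix m l ℝ →L[ℝ] ℝ :=
  LinearMap.toContinuousLinearMap
    { toFun := fun X => X i j
      map_add' := fun X Y => rfl
      map_smul' := fun c X => rfl }

lemma entry_hasDerivAt {F : ℝ → Matrix m l ℝ} {F' : Matrix m l ℝ} {t : ℝ}
    (h : HasDerivAt F F' t) (i : m) (j : l) :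
    HasDerivAt (fun s => F s i j) (F' i j) t :=
  ((entryCLM i j).hasFDerivAt.comp_hasDerivAt t h :)

lemma hasDerivAt_mmul {F : ℝ → Matrix m l ℝ} {G : ℝ → Matrix l p ℝ} {F' G'} {t : ℝ}
    (hF : HasDerivAt F F' t) (hG : HasDerivAt G G' t) :
    HasDerivAt (fun s => F s * G s) (F' * G t + F t * G') t := by
  apply hasDerivAt_matrix
  intro i j
  simp only [Matrix.mul_apply, Matrix.add_apply]
  have := HasDerivAt.fun_sum (fun k (_ : k ∈ Finset.univ) =>
    ((entry_hasDerivAt hF i k).mul (entry_hasDerivAt hG k j)))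
  simpa [Finset.sum_add_distrib] using this

/-! #### the unipotent integrating factor W -/

variable (r : ℝ → Matrix (Fin n) (Fin 1) ℝ)

noncomputable def wf : ℝ → Matrix (Fin n) (Fin 1) ℝ :=
  fun t => Matrix.of fun i j => ∫ s in (0:ℝ)..t, r s i j

noncomputable def uf : ℝ → Matrix (Fin n) (Fin n) ℝ :=
  fun t => Matrix.of fun i j => ∫ s in (0:ℝ)..t, (r s * (-(wf r s)ᵀ)) i j

noncomputable def Wf : ℝ → Matrix (Idx n) (Idx n) ℝ :=
  fun t => blk3 1 (wf r t) (uf r t) 0 1 (-(wf r t)ᵀ) 0 0 1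

noncomputable def Wif : ℝ → Matrix (Idx n) (Idx n) ℝ :=
  fun t => blk3 1 (-(wf r t)) (-(wf r t * (wf r t)ᵀ) - uf r t) 0 1 ((wf r t)ᵀ) 0 0 1

def Nf3 : ℝ → Matrix (Idx n) (Idx n) ℝ := fun t => blk3 0 (r t) 0 0 0 (-(r t)ᵀ) 0 0 0

lemma Wf_mul_Wif (t : ℝ) : Wf r t * Wif r t = 1 := by
  unfold Wf Wif
  rw [blk3_mul, blk3_one]
  apply blk3_congr <;> simp <;> abel

lemma Wif_mul_Wf (t : ℝ) : Wif r t * Wf r t = 1 := by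
  unfold Wf Wif
  rw [blk3_mul, blk3_one]
  apply blk3_congr <;> simp <;> abel

lemma wf_zero : wf r 0 = 0 := by
  ext i j; simp [wf]

lemma uf_zero : uf r 0 = 0 := by
  ext i j; simp [uf]

lemma Wf_zero : Wf r 0 = 1 := by
  unfold Wf
  rw [blk3_one, wf_zero, uf_zero]
  apply blk3_congr <;> simp

lemma Wif_zero : Wif r 0 = 1 := by
  unfold Wif
  rw [blk3_one, wf_zero, uf_zero]
  apply blk3_congr <;> simp

variable (hrc : ∀ i j, Continuous fun s => r s i j)

include hrc in
lemma wf_hasDerivAt (t : ℝ) : HasDerivAt (wf r) (r t) t := by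
  apply hasDerivAt_matrix
  intro i j
  exact ((hrc i j).integral_hasStrictDerivAt 0 t).hasDerivAt

include hrc in
lemma wf_cont : ∀ i j, Continuous fun s => wf r s i j := fun i j =>
  continuous_iff_continuousAt.2 fun t => (entry_hasDerivAt (wf_hasDerivAt r hrc t) i j).continuousAt

include hrc in
lemma wft_hasDerivAt (t : ℝ) : HasDerivAt (fun s => (wf r s)ᵀ) ((r t)ᵀ) t := by
  apply hasDerivAt_matrix
  intro i j
  simpa using entry_hasDerivAt (wf_hasDerivAt r hrc t) j i

include hrc in
lemma uf_hasDerivAt (t : ℝ) : HasDerivAt (uf r) (r t * (-(wf r t)ᵀ)) t := by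
  apply hasDerivAt_matrix
  intro i j
  have hcont : Continuous fun s => (r s * (-(wf r s)ᵀ)) i j := by
    simp only [Matrix.mul_apply]
    refine continuous_finset_sum _ fun k _ => (hrc i k).mul ?_
    exact (wf_cont r hrc j k).neg
  exact (hcont.integral_hasStrictDerivAt 0 t).hasDerivAt

include hrc in
lemma Wf_hasDerivAt (t : ℝ) : HasDerivAt (Wf r) (Nf3 r t * Wf r t) t := by
  have hNW : Nf3 r t * Wf r t
      = blk3 0 (r t) (r t * (-(wf r t)ᵀ)) 0 0 (-(r t)ᵀ) 0 0 0 := by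
    unfold Nf3 Wf
    rw [blk3_mul]
    apply blk3_congr <;> simp
  rw [hNW]
  apply hasDerivAt_matrix
  intro i j
  have hw := wf_hasDerivAt r hrc t
  have hu := uf_hasDerivAt r hrc t
  have hwt : HasDerivAt (fun s => -(wf r s)ᵀ) (-(r t)ᵀ) t := (wft_hasDerivAt r hrc t).neg
  rcases i with (i | i) | i <;> rcases j with (j | j) | j <;>
    simp only [Wf, b11, b12, b13, b21, b22, b23, b31, b32, b33, Matrix.zero_apply]
  · exact hasDerivAt_const _ _
  · exact entry_hasDerivAt hw i j
  · exact entry_hasDerivAt hu i j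
  · exact hasDerivAt_const _ _
  · exact hasDerivAt_const _ _
  · exact entry_hasDerivAt hwt i j
  · exact hasDerivAt_const _ _
  · exact hasDerivAt_const _ _
  · exact hasDerivAt_const _ _

include hrc in
lemma Wif_hasDerivAt (t : ℝ) : HasDerivAt (Wif r) (-(Wif r t * Nf3 r t)) t := by
  have hWiN : -(Wif r t * Nf3 r t)
      = blk3 0 (-(r t)) (-(wf r t * (r t)ᵀ)) 0 0 ((r t)ᵀ) 0 0 0 := by
    unfold Nf3 Wif
    rw [blk3_mul, blk3_neg]
    apply blk3_congr <;> simp [Matrix.mul_neg] <;> abel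
  rw [hWiN]
  apply hasDerivAt_matrix
  intro i j
  have hw := wf_hasDerivAt r hrc t
  have hu := uf_hasDerivAt r hrc t
  have hwt := wft_hasDerivAt r hrc t
  have h13 : HasDerivAt (fun s => -(wf r s * (wf r s)ᵀ) - uf r s) (-(wf r t * (r t)ᵀ)) t := by
    have := ((hasDerivAt_mmul hw hwt).neg).sub hu
    refine this.congr_deriv ?_
    simp only [Matrix.mul_neg]
    abel
  rcases i with (i | i) | i <;> rcases j with (j | j) | j <;>
    simp only [Wif, b11, b12, b13, b21, b22, b23, b31, b32, b33, Matrix.zero_apply]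
  · exact hasDerivAt_const _ _
  · exact entry_hasDerivAt hw.neg i j
  · exact entry_hasDerivAt h13 i j
  · exact hasDerivAt_const _ _
  · exact hasDerivAt_const _ _
  · exact entry_hasDerivAt hwt i j
  · exact hasDerivAt_const _ _
  · exact hasDerivAt_const _ _
  · exact hasDerivAt_const _ _

end S16

open S16 in
/-- Any solution `L(t) = [[−Q(t), r(t), 0], [a₀ᵀ, 0, −r(t)ᵀ], [0, −a₀, Q(t)ᵀ]]`
of the Lax equation `L̇ = [L, M]` with initial condition `L(0) = V` is given by
`L(t) = G₁(t)⁻¹ V G₁(t)`, where `exp(tV) = G₁(t) G₂(t)` is the block Cholesky decomposition. -/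
theorem stmt16 (n : ℕ) (A₀ : Matrix (Fin n) (Fin n) ℝ) (hA₀ : A₀ᵀ = A₀)
    (a₀ : Matrix (Fin n) (Fin 1) ℝ) (G₁ G₂ : ℝ → Matrix (Idx n) (Idx n) ℝ)
    (hlow : ∀ t : ℝ, ∃ (B₁₁ : Matrix (Fin n) (Fin n) ℝ) (B₂₁ : Matrix (Fin 1) (Fin n) ℝ)
      (B₂₂ : Matrix (Fin 1) (Fin 1) ℝ) (B₃₁ : Matrix (Fin n) (Fin n) ℝ)
      (B₃₂ : Matrix (Fin n) (Fin 1) ℝ) (B₃₃ : Matrix (Fin n) (Fin n) ℝ),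
      G₁ t = blk3 B₁₁ 0 0 B₂₁ B₂₂ 0 B₃₁ B₃₂ B₃₃)
    (hup : ∀ t : ℝ, ∃ (C₁₂ : Matrix (Fin n) (Fin 1) ℝ) (C₁₃ : Matrix (Fin n) (Fin n) ℝ)
      (C₂₃ : Matrix (Fin 1) (Fin n) ℝ), G₂ t = blk3 1 C₁₂ C₁₃ 0 1 C₂₃ 0 0 1)
    (hdec : ∀ t : ℝ, NormedSpace.exp (t • Vmat A₀ a₀) = G₁ t * G₂ t)
    (Q : ℝ → Matrix (Fin n) (Fin n) ℝ) (r : ℝ → Matrix (Fin n) (Fin 1) ℝ)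
    (hLax : ∀ (t : ℝ) (i j : Idx n),
      HasDerivAt (fun s => blk3 (-(Q s)) (r s) 0 a₀ᵀ 0 (-(r s)ᵀ) 0 (-a₀) (Q s)ᵀ i j)
        ((blk3 (-(Q t)) (r t) 0 a₀ᵀ 0 (-(r t)ᵀ) 0 (-a₀) (Q t)ᵀ *
            blk3 (-(Q t)) 0 0 a₀ᵀ 0 0 0 (-a₀) (Q t)ᵀ -
          blk3 (-(Q t)) 0 0 a₀ᵀ 0 0 0 (-a₀) (Q t)ᵀ *
            blk3 (-(Q t)) (r t) 0 a₀ᵀ 0 (-(r t)ᵀ) 0 (-a₀) (Q t)ᵀ) i j) t)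
    (hinit : blk3 (-(Q 0)) (r 0) 0 a₀ᵀ 0 (-(r 0)ᵀ) 0 (-a₀) (Q 0)ᵀ = Vmat A₀ a₀) :
    ∀ t : ℝ, blk3 (-(Q t)) (r t) 0 a₀ᵀ 0 (-(r t)ᵀ) 0 (-a₀) (Q t)ᵀ
      = (G₁ t)⁻¹ * Vmat A₀ a₀ * G₁ t := by
  classical
  obtain ⟨L, hL⟩ : ∃ L : ℝ → Matrix (Idx n) (Idx n) ℝ,
      ∀ s, L s = blk3 (-(Q s)) (r s) 0 a₀ᵀ 0 (-(r s)ᵀ) 0 (-a₀) (Q s)ᵀ := ⟨_, fun _ => rfl⟩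
  obtain ⟨M, hM⟩ : ∃ M : ℝ → Matrix (Idx n) (Idx n) ℝ,
      ∀ s, M s = blk3 (-(Q s)) 0 0 a₀ᵀ 0 0 0 (-a₀) (Q s)ᵀ := ⟨_, fun _ => rfl⟩
  -- the symmetric matrix V
  have hV : (Vmat A₀ a₀)ᵀ = Vmat A₀ a₀ := by
    unfold Vmat
    rw [blk3_transpose]
    apply blk3_congr <;> simp [hA₀]
  -- matrix-level Lax equation
  have hLd : ∀ τ, HasDerivAt L (L τ * M τ - M τ * L τ) τ := by
    intro τ
    have h1 : HasDerivAt (fun s => blk3 (-(Q s)) (r s) 0 a₀ᵀ 0 (-(r s)ᵀ) 0 (-a₀) (Q s)ᵀ)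
        (blk3 (-(Q τ)) (r τ) 0 a₀ᵀ 0 (-(r τ)ᵀ) 0 (-a₀) (Q τ)ᵀ *
            blk3 (-(Q τ)) 0 0 a₀ᵀ 0 0 0 (-a₀) (Q τ)ᵀ -
          blk3 (-(Q τ)) 0 0 a₀ᵀ 0 0 0 (-a₀) (Q τ)ᵀ *
            blk3 (-(Q τ)) (r τ) 0 a₀ᵀ 0 (-(r τ)ᵀ) 0 (-a₀) (Q τ)ᵀ) τ :=
      hasDerivAt_matrix (hLax τ)
    simpa only [← hL, ← hM] using h1
  -- continuity of r entrywise
  have hrc : ∀ i j, Continuous fun s => r s i j := by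
    intro i j
    refine continuous_iff_continuousAt.2 fun τ => ?_
    exact (hLax τ (Sum.inl (Sum.inl i)) (Sum.inl (Sum.inr j))).continuousAt
  -- L = M + N
  have hMN : ∀ τ, M τ + Nf3 r τ = L τ := by
    intro τ
    rw [hM τ, hL τ]
    unfold Nf3
    rw [blk3_add]
    apply blk3_congr <;> simp
  -- the matrix Z = W⁻¹ L W is constant, equal to V
  have hZd : ∀ τ, HasDerivAt (fun s => Wif r s * L s * Wf r s) 0 τ := by
    intro τ
    have h1 := hasDerivAt_mmul
      (hasDerivAt_mmul (Wif_hasDerivAt r hrc τ) (hLd τ)) (Wf_hasDerivAt r hrc τ)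
    convert h1 using 1
    rw [← hMN τ]
    noncomm_ring
  have hZV : ∀ τ, Wif r τ * L τ * Wf r τ = Vmat A₀ a₀ := by
    intro τ
    have hconst :=
      is_const_of_deriv_eq_zero (𝕜 := ℝ) (fun s => (hZd s).differentiableAt)
        (fun s => (hZd s).deriv) τ 0
    rw [hconst, Wif_zero, Wf_zero, Matrix.one_mul, Matrix.mul_one, hL 0, hinit]
  have hLWV : ∀ τ, L τ = Wf r τ * Vmat A₀ a₀ * Wif r τ := by
    intro τ
    rw [← hZV τ,
      show Wf r τ * (Wif r τ * L τ * Wf r τ) * Wif r τ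
        = (Wf r τ * Wif r τ) * L τ * (Wf r τ * Wif r τ) from by noncomm_ring,
      Wf_mul_Wif, Matrix.one_mul, Matrix.mul_one]
  have hVWi : ∀ τ, Vmat A₀ a₀ * Wif r τ = Wif r τ * L τ := by
    intro τ
    rw [← hZV τ,
      show Wif r τ * L τ * Wf r τ * Wif r τ = Wif r τ * L τ * (Wf r τ * Wif r τ) from by
        noncomm_ring,
      Wf_mul_Wif, Matrix.mul_one]
  -- the function D = exp(tV) W⁻¹ satisfies D' = D M
  have hDd : ∀ τ, HasDerivAt (fun s => NormedSpace.exp (s • Vmat A₀ a₀) * Wif r s)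
      ((NormedSpace.exp (τ • Vmat A₀ a₀) * Wif r τ) * M τ) τ := by
    intro τ
    have hexp : HasDerivAt (fun s : ℝ => NormedSpace.exp (s • Vmat A₀ a₀))
        (NormedSpace.exp (τ • Vmat A₀ a₀) * Vmat A₀ a₀) τ := hasDerivAt_exp_smul_const _ τ
    have h1 := hasDerivAt_mmul hexp (Wif_hasDerivAt r hrc τ)
    convert h1 using 1
    rw [show NormedSpace.exp (τ • Vmat A₀ a₀) * Vmat A₀ a₀ * Wif r τ +
          NormedSpace.exp (τ • Vmat A₀ a₀) * -(Wif r τ * Nf3 r τ)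
        = NormedSpace.exp (τ • Vmat A₀ a₀) * (Vmat A₀ a₀ * Wif r τ - Wif r τ * Nf3 r τ) from by
        noncomm_ring,
      hVWi τ,
      show Wif r τ * L τ - Wif r τ * Nf3 r τ = Wif r τ * (L τ - Nf3 r τ) from by noncomm_ring,
      show L τ - Nf3 r τ = M τ from by rw [← hMN τ]; abel,
      Matrix.mul_assoc]
  -- upper projection of D vanishes identically (Gronwall)
  have hMlow : ∀ τ, upProj n (M τ) = 0 := by
    intro τ
    rw [upProj_eq_zero]
    intro i j hij
    rw [hM τ]
    rcases i with (i | i) | i <;> rcases j with (j | j) | j <;>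
      simp [ordIdx] at hij ⊢
  have hMcont : Continuous M := by
    have : M = fun s => L s - Nf3 r s := funext fun s => by
      rw [← hMN s]; abel
    rw [this]
    have hLcont : Continuous L :=
      continuous_iff_continuousAt.2 fun τ => (hLd τ).continuousAt
    have hNcont : Continuous (Nf3 r) := by
      apply continuous_matrix
      intro i j
      rcases i with (i | i) | i <;> rcases j with (j | j) | j <;>
        simp only [Nf3, b11, b12, b13, b21, b22, b23, b31, b32, b33, Matrix.zero_apply,
          Matrix.neg_apply, Matrix.transpose_apply]
      · exact continuous_const
      · exact hrc i j
      · exact continuous_const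
      · exact continuous_const
      · exact continuous_const
      · exact (hrc j i).neg
      · exact continuous_const
      · exact continuous_const
      · exact continuous_const
    exact hLcont.sub hNcont
  have hPzero : ∀ τ, upProj n (NormedSpace.exp (τ • Vmat A₀ a₀) * Wif r τ) = 0 := by
    intro t
    -- Gronwall-type uniqueness on [-(|t|+1), |t|+1]
    set aa : ℝ := -(|t| + 1) with haa
    set bb : ℝ := |t| + 1 with hbb
    have habs0 : (0:ℝ) ≤ |t| := abs_nonneg t
    obtain ⟨C, hC⟩ := (isCompact_Icc (a := aa) (b := bb)).exists_bound_of_continuousOn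
      hMcont.continuousOn
    set C' : ℝ := max C 0 with hC'
    have hC'0 : 0 ≤ C' := le_max_right _ _
    set cKc : ℝ := (upProj n).opNorm * C' with hcKc
    have hcKc0 : 0 ≤ cKc := mul_nonneg (ContinuousLinearMap.opNorm_nonneg _) hC'0
    set Kc : NNReal := ⟨cKc, hcKc0⟩ with hKc
    set v : ℝ → Matrix (Idx n) (Idx n) ℝ → Matrix (Idx n) (Idx n) ℝ :=
      fun s X => if s ∈ Set.Icc aa bb then upProj n (X * M s) else 0 with hv
    have hvlip : ∀ s, LipschitzOnWith Kc (v s) Set.univ := by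
      intro s
      apply LipschitzOnWith.of_dist_le_mul
      intro X _ Y _
      by_cases hs : s ∈ Set.Icc aa bb
      · simp only [hv, if_pos hs]
        rw [dist_eq_norm, ← map_sub, ← Matrix.sub_mul]
        calc ‖upProj n ((X - Y) * M s)‖ ≤ (upProj n).opNorm * ‖(X - Y) * M s‖ :=
              (upProj n).le_opNorm _
          _ ≤ (upProj n).opNorm * (‖X - Y‖ * ‖M s‖) := by
              gcongr
              · exact ContinuousLinearMap.opNorm_nonneg _
              exact norm_mul_le _ _
          _ ≤ (upProj n).opNorm * (‖X - Y‖ * C') := by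
              gcongr
              · exact ContinuousLinearMap.opNorm_nonneg _
              exact le_max_of_le_left (hC s hs)
          _ = Kc * dist X Y := by
              rw [dist_eq_norm]
              show _ = cKc * _
              ring
      · simp only [hv, if_neg hs]
        rw [dist_self]
        positivity
    have hPcont : Continuous (fun s => upProj n (NormedSpace.exp (s • Vmat A₀ a₀) * Wif r s)) :=
      continuous_iff_continuousAt.2 fun τ =>
        ((upProj n).hasFDerivAt.comp_hasDerivAt τ (hDd τ)).continuousAt
    have hbb0 : (0:ℝ) < bb := by rw [hbb]; linarith
    have h0mem : (0:ℝ) ∈ Set.Ioo aa bb := ⟨by rw [haa]; linarith, hbb0⟩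
    have key := ODE_solution_unique_of_mem_Icc (v := v) (s := fun _ => Set.univ) (K := Kc)
      (fun s _ => hvlip s) h0mem (hPcont.continuousOn)
      (fun s hs => by
        have hd := (upProj n).hasFDerivAt.comp_hasDerivAt s (hDd s)
        have : v s (upProj n (NormedSpace.exp (s • Vmat A₀ a₀) * Wif r s))
            = upProj n ((NormedSpace.exp (s • Vmat A₀ a₀) * Wif r s) * M s) := by
          show (if s ∈ Set.Icc aa bb then
            upProj n ((upProj n (NormedSpace.exp (s • Vmat A₀ a₀) * Wif r s)) * M s) else 0) = _
          rw [if_pos (Set.mem_Icc_of_Ioo hs)]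
          exact (upProj_mul_low (hMlow s)).symm
        rw [this]
        exact hd)
      (fun _ _ => trivial)
      continuousOn_const
      (fun s hs => by
        have : v s 0 = 0 := by
          show (if s ∈ Set.Icc aa bb then
            upProj n ((0 : Matrix (Idx n) (Idx n) ℝ) * M s) else 0) = 0
          split_ifs with h
          · rw [Matrix.zero_mul, map_zero]
          · rfl
        rw [this]
        exact hasDerivAt_const _ _)
      (fun _ _ => trivial)
      (by
        show upProj n (NormedSpace.exp ((0:ℝ) • Vmat A₀ a₀) * Wif r 0) = 0
        rw [zero_smul, NormedSpace.exp_zero, Wif_zero, Matrix.mul_one]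
        rw [upProj_eq_zero]
        intro i j hij
        exact Matrix.one_apply_ne (fun h => by subst h; exact lt_irrefl _ hij))
    have htmem : t ∈ Set.Icc aa bb :=
      ⟨by rw [haa, hbb]; linarith [neg_abs_le t], by rw [hbb]; linarith [le_abs_self t]⟩
    exact key htmem
  -- endgame: algebraic identification at each time t
  intro t
  obtain ⟨B₁₁, B₂₁, B₂₂, B₃₁, B₃₂, B₃₃, hG1⟩ := hlow t
  obtain ⟨C₁₂, C₁₃, C₂₃, hG2⟩ := hup t
  obtain ⟨x12, x13, x23, hX⟩ : ∃ a b c, G₂ t * Wif r t = blk3 1 a b 0 1 c 0 0 1 := by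
    refine ⟨C₁₂ - wf r t, (-(wf r t * (wf r t)ᵀ) - uf r t) + C₁₂ * (wf r t)ᵀ + C₁₃,
      (wf r t)ᵀ + C₂₃, ?_⟩
    rw [hG2]
    show _ * Wif r t = _
    unfold Wif
    rw [blk3_mul]
    apply blk3_congr <;> simp <;> abel
  have hDt : NormedSpace.exp (t • Vmat A₀ a₀) * Wif r t = G₁ t * (G₂ t * Wif r t) := by
    rw [← Matrix.mul_assoc, ← hdec t]
  have hDblk : NormedSpace.exp (t • Vmat A₀ a₀) * Wif r t
      = blk3 B₁₁ (B₁₁ * x12) (B₁₁ * x13) B₂₁ (B₂₁ * x12 + B₂₂) (B₂₁ * x13 + B₂₂ * x23)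
          B₃₁ (B₃₁ * x12 + B₃₂) (B₃₁ * x13 + B₃₂ * x23 + B₃₃) := by
    rw [hDt, hG1, hX, blk3_mul]
    apply blk3_congr <;> simp <;> abel
  have hup0 := upProj_eq_zero.1 (hDblk ▸ hPzero t)
  have h12 : B₁₁ * x12 = 0 := by
    ext i j
    simpa using hup0 (Sum.inl (Sum.inl i)) (Sum.inl (Sum.inr j)) (by simp [ordIdx])
  have h13 : B₁₁ * x13 = 0 := by
    ext i j
    simpa using hup0 (Sum.inl (Sum.inl i)) (Sum.inr j) (by simp [ordIdx])
  have h23 : B₂₁ * x13 + B₂₂ * x23 = 0 := by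
    ext i j
    simpa using hup0 (Sum.inl (Sum.inr i)) (Sum.inr j) (by simp [ordIdx])
  -- positive definiteness gives invertibility of B₁₁ and B₂₂
  have hpd : (NormedSpace.exp (t • Vmat A₀ a₀)).PosDef :=
    posDef_exp_symm (by rw [transpose_smul, hV])
  have hpd2 : ((NormedSpace.exp (t • Vmat A₀ a₀)).submatrix Sum.inl Sum.inl).PosDef :=
    posDef_submatrix_inl hpd
  have hpd11 : ((((NormedSpace.exp (t • Vmat A₀ a₀)).submatrix Sum.inl Sum.inl)).submatrix
      Sum.inl Sum.inl).PosDef := posDef_submatrix_inl hpd2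
  have hEblk : NormedSpace.exp (t • Vmat A₀ a₀)
      = blk3 B₁₁ (B₁₁ * C₁₂) (B₁₁ * C₁₃) B₂₁ (B₂₁ * C₁₂ + B₂₂) (B₂₁ * C₁₃ + B₂₂ * C₂₃)
          B₃₁ (B₃₁ * C₁₂ + B₃₂) (B₃₁ * C₁₃ + B₃₂ * C₂₃ + B₃₃) := by
    rw [hdec t, hG1, hG2, blk3_mul]
    apply blk3_congr <;> simp <;> abel
  have h11eq : (((NormedSpace.exp (t • Vmat A₀ a₀)).submatrix Sum.inl Sum.inl)).submatrix
      Sum.inl Sum.inl = B₁₁ := by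
    ext i j
    rw [hEblk]
    rfl
  obtain ⟨iB11⟩ : Nonempty (Invertible B₁₁) := by
    rw [← h11eq]
    exact hpd11.isUnit.nonempty_invertible
  haveI := iB11
  have hx12 : x12 = 0 := by
    have h := congrArg (fun X => ⅟B₁₁ * X) h12
    simpa [← Matrix.mul_assoc] using h
  have hx13 : x13 = 0 := by
    have h := congrArg (fun X => ⅟B₁₁ * X) h13
    simpa [← Matrix.mul_assoc] using h
  -- invertibility of B₂₂ via the leading 2×2 block
  have hEtl : (NormedSpace.exp (t • Vmat A₀ a₀)).submatrix Sum.inl Sum.inl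
      = Matrix.fromBlocks B₁₁ 0 B₂₁ B₂₂ * Matrix.fromBlocks 1 C₁₂ 0 1 := by
    rw [Matrix.fromBlocks_multiply]
    ext (i | i) (j | j) <;> rw [hEblk] <;>
      simp [Matrix.submatrix_apply]
  have hdetpos := hpd2.det_pos
  rw [hEtl, Matrix.det_mul, Matrix.det_fromBlocks_zero₁₂, Matrix.det_fromBlocks_zero₂₁,
    Matrix.det_one, Matrix.det_one] at hdetpos
  have hdet22 : IsUnit B₂₂.det := by
    rw [isUnit_iff_ne_zero]
    intro h0
    rw [h0] at hdetpos
    simp at hdetpos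
  haveI := B₂₂.invertibleOfIsUnitDet hdet22
  have hx23 : x23 = 0 := by
    rw [hx13, Matrix.mul_zero, zero_add] at h23
    have h : x23 = ⅟B₂₂ * (B₂₂ * x23) := by
      rw [← Matrix.mul_assoc, invOf_mul_self, Matrix.one_mul]
    rw [h23, Matrix.mul_zero] at h
    exact h
  have hXone : G₂ t * Wif r t = 1 := by
    rw [hX, hx12, hx13, hx23, blk3_one]
  have hG1D : G₁ t = NormedSpace.exp (t • Vmat A₀ a₀) * Wif r t := by
    rw [hDt, hXone, Matrix.mul_one]
  -- exp(tV) * exp(-tV) = 1 and commutation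
  have hee : ∀ s s' : ℝ, NormedSpace.exp (s • Vmat A₀ a₀) * NormedSpace.exp (s' • Vmat A₀ a₀)
      = NormedSpace.exp ((s + s') • Vmat A₀ a₀) := by
    intro s s'
    rw [← Matrix.exp_add_of_commute _ _
      (((Commute.refl (Vmat A₀ a₀)).smul_left s).smul_right s'), add_smul]
  have hG1inv : (G₁ t)⁻¹ = Wf r t * NormedSpace.exp ((-t) • Vmat A₀ a₀) := by
    apply Matrix.inv_eq_right_inv
    rw [hG1D,
      show NormedSpace.exp (t • Vmat A₀ a₀) * Wif r t *
          (Wf r t * NormedSpace.exp ((-t) • Vmat A₀ a₀))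
        = NormedSpace.exp (t • Vmat A₀ a₀) *
          ((Wif r t * Wf r t) * NormedSpace.exp ((-t) • Vmat A₀ a₀)) from by noncomm_ring,
      Wif_mul_Wf, Matrix.one_mul, hee]
    rw [add_neg_cancel, zero_smul, NormedSpace.exp_zero]
  -- final computation
  have hcomm : Vmat A₀ a₀ * NormedSpace.exp (t • Vmat A₀ a₀)
      = NormedSpace.exp (t • Vmat A₀ a₀) * Vmat A₀ a₀ :=
    (((Commute.refl (Vmat A₀ a₀)).smul_right t).exp_right).eq
  rw [← hL t, hG1inv, hG1D, hLWV t,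
    show Wf r t * NormedSpace.exp ((-t) • Vmat A₀ a₀) * Vmat A₀ a₀ *
        (NormedSpace.exp (t • Vmat A₀ a₀) * Wif r t)
      = Wf r t * (NormedSpace.exp ((-t) • Vmat A₀ a₀) *
          (Vmat A₀ a₀ * NormedSpace.exp (t • Vmat A₀ a₀)) * Wif r t) from by noncomm_ring,
    hcomm,
    show Wf r t * (NormedSpace.exp ((-t) • Vmat A₀ a₀) *
        (NormedSpace.exp (t • Vmat A₀ a₀) * Vmat A₀ a₀) * Wif r t)
      = Wf r t * ((NormedSpace.exp ((-t) • Vmat A₀ a₀) * NormedSpace.exp (t • Vmat A₀ a₀)) *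
          Vmat A₀ a₀ * Wif r t) from by noncomm_ring,
    hee, neg_add_cancel, zero_smul, NormedSpace.exp_zero, Matrix.one_mul, Matrix.mul_assoc]
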